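/- Let μ be a negatively correlated distribution on size-k subsets of [n], fix i, and condition on a uniformly random element j drawn from a set A ⊆ [n]\{i} of size m being excluded (j ∉ F). Then the expected new marginal of i satisfies E_j[P_{F∼μ|j∉F}[i ∈ F]] − p_i ≤ (1/(m·(1−p^max)))·p_i, where p^max = max_ℓ p_ℓ < 1, provided [n]\(A ∪ {i}) has all covariance terms accounted for via the homogeneity identity ∑_{j∈[n]}(p_i p_j − P[i,j∈F]) = 0. -/

import Mathlib

/-- Marginal of element `i` under a distribution on subsets of `Fin n`. -/
noncomputable def marg {n : ℕ} (μ : Finset (Fin n) → ℝ) (i : Fin n) : ℝ :=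
  ∑ S ∈ Finset.univ.filter (fun S : Finset (Fin n) => i ∈ S), μ S

/-- The distribution `μ` conditioned on the event `j ∉ F`. -/
noncomputable def condOut {n : ℕ} (μ : Finset (Fin n) → ℝ) (j : Fin n)
    (S : Finset (Fin n)) : ℝ :=
  if j ∈ S then 0 else μ S / (1 - marg μ j)

theorem expected_drift (n k m : ℕ) (hm : 0 < m)
    (μ : Finset (Fin n) → ℝ)
    (hμ0 : ∀ S, 0 ≤ μ S) (hμ1 : ∑ S : Finset (Fin n), μ S = 1)
    (hhom : ∀ S, μ S ≠ 0 → S.card = k)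
    (hnegcor : ∀ i j : Fin n, i ≠ j →
      (∑ S ∈ Finset.univ.filter (fun S : Finset (Fin n) => i ∈ S ∧ j ∈ S), μ S) ≤
        marg μ i * marg μ j)
    (pmax : ℝ) (hpmax : ∀ l, marg μ l ≤ pmax) (hpmax1 : pmax < 1)
    (i : Fin n) (A : Finset (Fin n)) (hA : A ⊆ Finset.univ.erase i)
    (hAcard : A.card = m) :
    (1 / (m : ℝ)) * ∑ j ∈ A, marg (condOut μ j) i - marg μ i ≤
      (1 / (m * (1 - pmax))) * marg μ i := by
  classical
  have hp0 : ∀ l : Fin n, 0 ≤ marg μ l := fun l =>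
    Finset.sum_nonneg fun S _ => hμ0 S
  have hpos : ∀ l : Fin n, 0 < 1 - marg μ l := fun l => by
    have := hpmax l; linarith
  set r : Fin n → ℝ := fun j =>
    ∑ S ∈ Finset.univ.filter (fun S : Finset (Fin n) => i ∈ S ∧ j ∈ S), μ S with hr
  have hri : r i = marg μ i := by
    simp [hr, marg]
  have hmarg : ∀ j : Fin n, marg (condOut μ j) i * (1 - marg μ j) = marg μ i - r j := by
    intro j
    have hne : (1 : ℝ) - marg μ j ≠ 0 := (hpos j).ne'
    rw [marg, Finset.sum_mul]
    have hstep : ∀ S ∈ Finset.univ.filter (fun S : Finset (Fin n) => i ∈ S),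
        condOut μ j S * (1 - marg μ j) = μ S - (if j ∈ S then μ S else 0) := by
      intro S _
      by_cases h : j ∈ S <;> simp [condOut, h, div_mul_cancel₀, hne]
    rw [Finset.sum_congr rfl hstep, Finset.sum_sub_distrib]
    congr 1
    rw [← Finset.sum_filter, Finset.filter_filter]
  have hsum_r : ∑ j : Fin n, r j = (k : ℝ) * marg μ i := by
    simp only [hr, Finset.sum_filter]
    rw [Finset.sum_comm, marg, Finset.sum_filter, Finset.mul_sum]
    apply Finset.sum_congr rfl
    intro S _
    by_cases hi : i ∈ S
    · by_cases h0 : μ S = 0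
      · simp [hi, h0]
      · have hk := hhom S h0
        simp only [hi, true_and, if_true]
        rw [Finset.sum_ite_mem, Finset.univ_inter, Finset.sum_const, hk]
        simp [mul_comm]
    · simp [hi]
  have hsum_p : ∑ j : Fin n, marg μ j = (k : ℝ) := by
    simp only [marg, Finset.sum_filter]
    rw [Finset.sum_comm]
    have : ∀ S ∈ (Finset.univ : Finset (Finset (Fin n))),
        (∑ j : Fin n, if j ∈ S then μ S else 0) = (k : ℝ) * μ S := by
      intro S _
      by_cases h0 : μ S = 0
      · simp [h0]
      · rw [Finset.sum_ite_mem, Finset.univ_inter, Finset.sum_const, hhom S h0]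
        simp [mul_comm]
    rw [Finset.sum_congr rfl this, ← Finset.mul_sum, hμ1, mul_one]
  have hkey : ∑ j ∈ Finset.univ.erase i, (marg μ i * marg μ j - r j)
      = marg μ i - marg μ i * marg μ i := by
    have h1 : ∑ j : Fin n, (marg μ i * marg μ j - r j) = 0 := by
      rw [Finset.sum_sub_distrib, ← Finset.mul_sum, hsum_p, hsum_r]; ring
    have h2 := Finset.sum_erase_add Finset.univ
      (fun j => marg μ i * marg μ j - r j) (Finset.mem_univ i)
    rw [h1] at h2
    simp only [hri] at h2
    linarith
  have hterm0 : ∀ j ∈ Finset.univ.erase i, 0 ≤ marg μ i * marg μ j - r j := by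
    intro j hj
    have hji : j ≠ i := Finset.ne_of_mem_erase hj
    have := hnegcor i j hji.symm
    simpa [hr] using sub_nonneg.mpr this
  have key : ∑ j ∈ A, (marg (condOut μ j) i - marg μ i) ≤ (1 / (1 - pmax)) * marg μ i := by
    have step : ∀ j ∈ A, marg (condOut μ j) i - marg μ i
        ≤ (marg μ i * marg μ j - r j) / (1 - pmax) := by
      intro j hj
      have hnn : 0 ≤ marg μ i * marg μ j - r j := hterm0 j (hA hj)
      have heq : marg (condOut μ j) i - marg μ i
          = (marg μ i * marg μ j - r j) / (1 - marg μ j) := by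
        have h := hmarg j
        have hne : (1 : ℝ) - marg μ j ≠ 0 := (hpos j).ne'
        field_simp
        nlinarith [h]
      rw [heq]
      gcongr
      · linarith [hpmax j]
    calc ∑ j ∈ A, (marg (condOut μ j) i - marg μ i)
        ≤ ∑ j ∈ A, (marg μ i * marg μ j - r j) / (1 - pmax) :=
          Finset.sum_le_sum step
      _ = (∑ j ∈ A, (marg μ i * marg μ j - r j)) / (1 - pmax) := by
          rw [Finset.sum_div]
      _ ≤ (∑ j ∈ Finset.univ.erase i, (marg μ i * marg μ j - r j)) / (1 - pmax) := by
          gcongr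
          · exact fun j hj _ => hterm0 j hj
      _ ≤ (1 / (1 - pmax)) * marg μ i := by
          rw [hkey, div_le_iff₀ (by linarith : (0:ℝ) < 1 - pmax)]
          have hc : (1 / (1 - pmax)) * marg μ i * (1 - pmax) = marg μ i := by
            rw [mul_comm (1 / (1 - pmax)), mul_assoc, one_div,
              inv_mul_cancel₀ (by linarith : (1:ℝ) - pmax ≠ 0), mul_one]
          rw [hc]
          nlinarith [mul_self_nonneg (marg μ i)]
  have hm' : (0 : ℝ) < (m : ℝ) := by exact_mod_cast hm
  have hsplit : ∑ j ∈ A, (marg (condOut μ j) i - marg μ i)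
      = ∑ j ∈ A, marg (condOut μ j) i - (m : ℝ) * marg μ i := by
    rw [Finset.sum_sub_distrib, Finset.sum_const, hAcard, nsmul_eq_mul]
  have h3 : ∑ j ∈ A, marg (condOut μ j) i - (m : ℝ) * marg μ i
      ≤ (1 / (1 - pmax)) * marg μ i := by rw [← hsplit]; exact key
  have h4 : (1 / (m : ℝ)) * (∑ j ∈ A, marg (condOut μ j) i - (m : ℝ) * marg μ i)
      ≤ (1 / (m : ℝ)) * ((1 / (1 - pmax)) * marg μ i) :=
    mul_le_mul_of_nonneg_left h3 (by positivity)
  calc (1 / (m : ℝ)) * ∑ j ∈ A, marg (condOut μ j) i - marg μ i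
      = (1 / (m : ℝ)) * (∑ j ∈ A, marg (condOut μ j) i - (m : ℝ) * marg μ i) := by
        field_simp
    _ ≤ (1 / (m : ℝ)) * ((1 / (1 - pmax)) * marg μ i) := h4
    _ = (1 / ((m : ℝ) * (1 - pmax))) * marg μ i := by
        rw [← mul_assoc, div_mul_div_comm, one_mul]
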